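/- Suppose 0 < q < 1, q ≠ 1, N ≥ 2, and let β be a linear functional on the span of the elements M_{ij} = (id+σ)(w_i⊗v_j) (with λ′ = q as above), with β vanishing on all V_{ab} and W_{ab}. If (β⊗id − id⊗β)(X_{ijk}) = 0 for all i and all j ≥ k (evaluated via the two expansions of X_{ijk} in terms of relations tensor generators and generators tensor relations), then there is a constant c ∈ K such that β(M_{ij}) = δ_{ij}·c for all i,j. -/

import Mathlib

open TensorProduct LinearMap

noncomputable section

variable (K : Type) [Field K]

def op1 {M : Type} [AddCommGroup M] [Module K M]
    (f : M ⊗[K] M →ₗ[K] M ⊗[K] M) : M ⊗[K] (M ⊗[K] M) →ₗ[K] M ⊗[K] (M ⊗[K] M) :=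
  (TensorProduct.assoc K M M M).toLinearMap ∘ₗ (LinearMap.rTensor M f) ∘ₗ
    (TensorProduct.assoc K M M M).symm.toLinearMap

def op2 {M : Type} [AddCommGroup M] [Module K M]
    (f : M ⊗[K] M →ₗ[K] M ⊗[K] M) : M ⊗[K] (M ⊗[K] M) →ₗ[K] M ⊗[K] (M ⊗[K] M) :=
  LinearMap.lTensor M f

def Sym3 {M : Type} [AddCommGroup M] [Module K M]
    (σ : M ⊗[K] M →ₗ[K] M ⊗[K] M) : M ⊗[K] (M ⊗[K] M) →ₗ[K] M ⊗[K] (M ⊗[K] M) :=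
  LinearMap.id + op1 K σ + op2 K σ + op1 K σ ∘ₗ op2 K σ + op2 K σ ∘ₗ op1 K σ +
    op1 K σ ∘ₗ op2 K σ ∘ₗ op1 K σ

/-- `β ⊗ id` on triple tensors. -/
def betaId {M : Type} [AddCommGroup M] [Module K M]
    (β : M ⊗[K] M →ₗ[K] K) : M ⊗[K] (M ⊗[K] M) →ₗ[K] M :=
  (TensorProduct.lid K M).toLinearMap ∘ₗ LinearMap.rTensor M β ∘ₗ
    (TensorProduct.assoc K M M M).symm.toLinearMap

/-- `id ⊗ β` on triple tensors. -/
def idBeta {M : Type} [AddCommGroup M] [Module K M]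
    (β : M ⊗[K] M →ₗ[K] K) : M ⊗[K] (M ⊗[K] M) →ₗ[K] M :=
  (TensorProduct.rid K M).toLinearMap ∘ₗ LinearMap.lTensor M β

variable (N : ℕ) (q : K)

abbrev H := (Fin N → K) × (Fin N → K)

def hb : Module.Basis (Fin N ⊕ Fin N) K (H K N) :=
  (Pi.basisFun K (Fin N)).prod (Pi.basisFun K (Fin N))

def vB (i : Fin N) : H K N := hb K N (Sum.inl i)
def wB (i : Fin N) : H K N := hb K N (Sum.inr i)

/-- The braid-equation solution `σ` on `H ⊗ H` with components as in the paper (`λ′ = q`). -/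
def sigmaH : (H K N) ⊗[K] (H K N) →ₗ[K] (H K N) ⊗[K] (H K N) :=
  ((hb K N).tensorProduct (hb K N)).constr K fun p =>
    match p with
    | (Sum.inl i, Sum.inl j) =>
        (if i = j then q ^ 2 else q) • (vB K N j ⊗ₜ[K] vB K N i) +
        (if (i : ℕ) < (j : ℕ) then q * (q - q⁻¹) else 0) • (vB K N i ⊗ₜ[K] vB K N j)
    | (Sum.inr i, Sum.inr j) =>
        (if i = j then q ^ 2 else q) • (wB K N j ⊗ₜ[K] wB K N i) +
        (if (j : ℕ) < (i : ℕ) then q * (q - q⁻¹) else 0) • (wB K N i ⊗ₜ[K] wB K N j)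
    | (Sum.inr i, Sum.inl j) =>
        (if i = j then 1 else q) • (vB K N j ⊗ₜ[K] wB K N i) -
        (if i = j then q * (q - q⁻¹) else 0) •
          ∑ k ∈ Finset.univ.filter (fun k : Fin N => (k : ℕ) < (i : ℕ)),
            (vB K N k ⊗ₜ[K] wB K N k)
    | (Sum.inl i, Sum.inr j) =>
        (if i = j then 1 else q⁻¹) • (wB K N j ⊗ₜ[K] vB K N i) +
        (if i = j then q⁻¹ * (q - q⁻¹) else 0) •
          ∑ k ∈ Finset.univ.filter (fun k : Fin N => (i : ℕ) < (k : ℕ)),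
            (wB K N k ⊗ₜ[K] vB K N k)

/-- `V_{ab} = v_a ⊗ v_b + q^{δ_{ab}+1} v_b ⊗ v_a`, intended for `a ≥ b`. -/
def VelH (a b : Fin N) : (H K N) ⊗[K] (H K N) :=
  vB K N a ⊗ₜ[K] vB K N b + (if a = b then q ^ 2 else q) • (vB K N b ⊗ₜ[K] vB K N a)

/-- `W_{ab} = w_a ⊗ w_b + q^{δ_{ab}+1} w_b ⊗ w_a`, intended for `a ≤ b`. -/
def WelH (a b : Fin N) : (H K N) ⊗[K] (H K N) :=
  wB K N a ⊗ₜ[K] wB K N b + (if a = b then q ^ 2 else q) • (wB K N b ⊗ₜ[K] wB K N a)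

/-- `M_{ij} = (id+σ)(w_i ⊗ v_j)`. -/
def Mel (i j : Fin N) : (H K N) ⊗[K] (H K N) :=
  wB K N i ⊗ₜ[K] vB K N j + (if i = j then 1 else q) • (vB K N j ⊗ₜ[K] wB K N i) -
    (if i = j then q * (q - q⁻¹) else 0) •
      ∑ k ∈ Finset.univ.filter (fun k : Fin N => (k : ℕ) < (i : ℕ)),
        (vB K N k ⊗ₜ[K] wB K N k)

/-- `X_{ijk} = Sym₃(w_i ⊗ v_j ⊗ v_k)`, for `j ≥ k`. -/
def Xel (i j k : Fin N) : (H K N) ⊗[K] ((H K N) ⊗[K] (H K N)) :=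
  Sym3 K (sigmaH K N q) (wB K N i ⊗ₜ[K] (vB K N j ⊗ₜ[K] vB K N k))

section Helpers
variable {K : Type} [Field K] {N : ℕ} {q : K}

def ev1 (K : Type) [Field K] (N : ℕ) (j : Fin N) : H K N →ₗ[K] K :=
  LinearMap.proj j ∘ₗ LinearMap.fst K _ _

@[simp] lemma ev1_vB (j a : Fin N) : ev1 K N j (vB K N a) = if a = j then 1 else 0 := by
  simp [ev1, vB, hb, Module.Basis.prod_apply, Pi.basisFun_apply, Pi.single_apply, eq_comm]

@[simp] lemma ev1_wB (j a : Fin N) : ev1 K N j (wB K N a) = 0 := by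
  simp [ev1, wB, hb, Module.Basis.prod_apply]

lemma sigma_wv (i j : Fin N) : sigmaH K N q (wB K N i ⊗ₜ vB K N j) =
    (if i = j then 1 else q) • (vB K N j ⊗ₜ[K] wB K N i) -
        (if i = j then q * (q - q⁻¹) else 0) •
          ∑ k ∈ Finset.univ.filter (fun k : Fin N => (k : ℕ) < (i : ℕ)),
            (vB K N k ⊗ₜ[K] wB K N k) := by
  have h : wB K N i ⊗ₜ[K] vB K N j = ((hb K N).tensorProduct (hb K N)) (Sum.inr i, Sum.inl j) := by
    rw [Module.Basis.tensorProduct_apply]; rfl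
  rw [sigmaH]; conv_lhs => rw [h, Module.Basis.constr_basis]

lemma sigma_vv (i j : Fin N) : sigmaH K N q (vB K N i ⊗ₜ vB K N j) =
    (if i = j then q ^ 2 else q) • (vB K N j ⊗ₜ[K] vB K N i) +
        (if (i : ℕ) < (j : ℕ) then q * (q - q⁻¹) else 0) • (vB K N i ⊗ₜ[K] vB K N j) := by
  have h : vB K N i ⊗ₜ[K] vB K N j = ((hb K N).tensorProduct (hb K N)) (Sum.inl i, Sum.inl j) := by
    rw [Module.Basis.tensorProduct_apply]; rfl
  rw [sigmaH]; conv_lhs => rw [h, Module.Basis.constr_basis]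


lemma sigma_wv_ne {i j : Fin N} (h : i ≠ j) :
    sigmaH K N q (wB K N i ⊗ₜ vB K N j) = q • (vB K N j ⊗ₜ[K] wB K N i) := by
  rw [sigma_wv]; simp [h]

lemma sigma_wv_diag (i : Fin N) : sigmaH K N q (wB K N i ⊗ₜ vB K N i) =
    vB K N i ⊗ₜ[K] wB K N i - (q * (q - q⁻¹)) •
      ∑ k ∈ Finset.univ.filter (fun k : Fin N => (k : ℕ) < (i : ℕ)),
        (vB K N k ⊗ₜ[K] wB K N k) := by
  rw [sigma_wv]; simp

lemma sigma_vv_diag (i : Fin N) : sigmaH K N q (vB K N i ⊗ₜ vB K N i) =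
    (q ^ 2) • (vB K N i ⊗ₜ[K] vB K N i) := by
  rw [sigma_vv]; simp

lemma sigma_vv_gt {i j : Fin N} (h : (j : ℕ) < (i : ℕ)) :
    sigmaH K N q (vB K N i ⊗ₜ vB K N j) = q • (vB K N j ⊗ₜ[K] vB K N i) := by
  rw [sigma_vv]
  have h1 : i ≠ j := by intro e; rw [e] at h; omega
  have h2 : ¬ ((i:ℕ) < (j:ℕ)) := by omega
  simp [h1, h2]

lemma sigma_vv_lt {i j : Fin N} (h : (i : ℕ) < (j : ℕ)) :
    sigmaH K N q (vB K N i ⊗ₜ vB K N j) =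
      q • (vB K N j ⊗ₜ[K] vB K N i) + (q * (q - q⁻¹)) • (vB K N i ⊗ₜ[K] vB K N j) := by
  rw [sigma_vv]
  have h1 : i ≠ j := by intro e; rw [e] at h; omega
  simp [h1, h]

lemma smul_tmul_left (c : K) {M P : Type} [AddCommGroup M] [Module K M] [AddCommGroup P]
    [Module K P] (x : M) (y : P) : (c • x) ⊗ₜ[K] y = c • (x ⊗ₜ[K] y) :=
  (TensorProduct.smul_tmul' c x y).symm

lemma smul_tmul_right (c : K) {M P : Type} [AddCommGroup M] [Module K M] [AddCommGroup P]
    [Module K P] (x : M) (y : P) : x ⊗ₜ[K] (c • y) = c • (x ⊗ₜ[K] y) := TensorProduct.tmul_smul c x y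

lemma op1_tmul (f : H K N ⊗[K] H K N →ₗ[K] H K N ⊗[K] H K N) (x y z : H K N) :
    op1 K f (x ⊗ₜ (y ⊗ₜ z)) = (TensorProduct.assoc K (H K N) (H K N) (H K N)) (f (x ⊗ₜ y) ⊗ₜ z) := by
  simp [op1]

lemma op2_tmul (f : H K N ⊗[K] H K N →ₗ[K] H K N ⊗[K] H K N) (x y z : H K N) :
    op2 K f (x ⊗ₜ (y ⊗ₜ z)) = x ⊗ₜ f (y ⊗ₜ z) := by
  simp [op2]

lemma betaId_tmul (β : H K N ⊗[K] H K N →ₗ[K] K) (x y z : H K N) :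
    betaId K β (x ⊗ₜ (y ⊗ₜ z)) = β (x ⊗ₜ y) • z := by
  simp [betaId]

lemma idBeta_tmul (β : H K N ⊗[K] H K N →ₗ[K] K) (x y z : H K N) :
    idBeta K β (x ⊗ₜ (y ⊗ₜ z)) = β (y ⊗ₜ z) • x := by
  simp [idBeta]

lemma Xel_offdiag {i j : Fin N} (h : i ≠ j) : Xel K N q i j j =
    (1 + q^2) • (wB K N i ⊗ₜ (vB K N j ⊗ₜ[K] vB K N j))
  + (q + q^3) • (vB K N j ⊗ₜ (wB K N i ⊗ₜ[K] vB K N j))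
  + (q^2 + q^4) • (vB K N j ⊗ₜ (vB K N j ⊗ₜ[K] wB K N i)) := by
  simp only [Xel, Sym3, LinearMap.add_apply, LinearMap.comp_apply, LinearMap.id_apply,
    op1_tmul, op2_tmul, LinearMap.map_smul, LinearEquiv.map_smul, sigma_wv_ne h, sigma_vv_diag, smul_tmul_left,
    smul_tmul_right, smul_smul, TensorProduct.assoc_tmul]
  module

end Helpers

section Fam2
variable {K : Type} [Field K] {N : ℕ} {q : K}

lemma filt_succ {m i : Fin N} (him : (m:ℕ)+1 = (i:ℕ)) :
    Finset.univ.filter (fun k : Fin N => (k:ℕ) < (i:ℕ)) =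
      insert m (Finset.univ.filter (fun k : Fin N => (k:ℕ) < (m:ℕ))) := by
  ext k; simp [Fin.ext_iff]; omega

lemma sum_filt_succ {M : Type} [AddCommGroup M] {m i : Fin N} (him : (m:ℕ)+1 = (i:ℕ))
    (f : Fin N → M) :
    ∑ k ∈ Finset.univ.filter (fun k : Fin N => (k:ℕ) < (i:ℕ)), f k =
      f m + ∑ k ∈ Finset.univ.filter (fun k : Fin N => (k:ℕ) < (m:ℕ)), f k := by
  rw [filt_succ him, Finset.sum_insert (by simp)]

variable {i m : Fin N}

lemma assoc_sub {M : Type} [AddCommGroup M] [Module K M] (x y : (M ⊗[K] M) ⊗[K] M) :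
    (TensorProduct.assoc K M M M) (x - y) =
      (TensorProduct.assoc K M M M) x - (TensorProduct.assoc K M M M) y :=
  map_sub (TensorProduct.assoc K M M M) x y

lemma assoc_add {M : Type} [AddCommGroup M] [Module K M] (x y : (M ⊗[K] M) ⊗[K] M) :
    (TensorProduct.assoc K M M M) (x + y) =
      (TensorProduct.assoc K M M M) x + (TensorProduct.assoc K M M M) y :=
  map_add (TensorProduct.assoc K M M M) x y

lemma assoc_sum {M : Type} [AddCommGroup M] [Module K M] {ι : Type} (s : Finset ι)
    (f : ι → (M ⊗[K] M) ⊗[K] M) :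
    (TensorProduct.assoc K M M M) (∑ k ∈ s, f k) =
      ∑ k ∈ s, (TensorProduct.assoc K M M M) (f k) :=
  map_sum (TensorProduct.assoc K M M M) f s

lemma assoc_smul {M : Type} [AddCommGroup M] [Module K M] (c : K) (x : (M ⊗[K] M) ⊗[K] M) :
    (TensorProduct.assoc K M M M) (c • x) = c • (TensorProduct.assoc K M M M) x :=
  map_smul (TensorProduct.assoc K M M M) c x

lemma e1 (him : (m:ℕ)+1 = (i:ℕ)) :
    op1 K (sigmaH K N q) (wB K N i ⊗ₜ (vB K N i ⊗ₜ[K] vB K N m)) =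
      vB K N i ⊗ₜ (wB K N i ⊗ₜ[K] vB K N m) -
        (q*(q-q⁻¹)) • ∑ k ∈ Finset.univ.filter (fun k : Fin N => (k:ℕ) < (i:ℕ)),
          vB K N k ⊗ₜ (wB K N k ⊗ₜ[K] vB K N m) := by
  rw [op1_tmul, sigma_wv_diag]
  simp only [TensorProduct.sub_tmul, smul_tmul_left, TensorProduct.sum_tmul,
    assoc_smul, assoc_sub, assoc_sum, TensorProduct.assoc_tmul]

lemma e2 (him : (m:ℕ)+1 = (i:ℕ)) :
    op2 K (sigmaH K N q) (wB K N i ⊗ₜ (vB K N i ⊗ₜ[K] vB K N m)) =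
      q • (wB K N i ⊗ₜ (vB K N m ⊗ₜ[K] vB K N i)) := by
  rw [op2_tmul, sigma_vv_gt (by omega), smul_tmul_right]

lemma e3 (him : (m:ℕ)+1 = (i:ℕ)) :
    op1 K (sigmaH K N q) (q • (wB K N i ⊗ₜ (vB K N m ⊗ₜ[K] vB K N i))) =
      (q*q) • (vB K N m ⊗ₜ (wB K N i ⊗ₜ[K] vB K N i)) := by
  have hne : i ≠ m := by intro e; rw [e] at him; omega
  rw [LinearMap.map_smul, op1_tmul, sigma_wv_ne hne]
  simp only [smul_tmul_left, assoc_smul, TensorProduct.assoc_tmul, smul_smul]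

lemma e4 (him : (m:ℕ)+1 = (i:ℕ)) :
    op2 K (sigmaH K N q) (vB K N i ⊗ₜ (wB K N i ⊗ₜ[K] vB K N m) -
        (q*(q-q⁻¹)) • ∑ k ∈ Finset.univ.filter (fun k : Fin N => (k:ℕ) < (i:ℕ)),
          vB K N k ⊗ₜ (wB K N k ⊗ₜ[K] vB K N m)) =
      q • (vB K N i ⊗ₜ (vB K N m ⊗ₜ[K] wB K N i)) -
        (q*(q-q⁻¹)) • ( vB K N m ⊗ₜ (vB K N m ⊗ₜ[K] wB K N m)
          - (q*(q-q⁻¹)) • ∑ l ∈ Finset.univ.filter (fun k : Fin N => (k:ℕ) < (m:ℕ)),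
              vB K N m ⊗ₜ (vB K N l ⊗ₜ[K] wB K N l)
          + q • ∑ k ∈ Finset.univ.filter (fun k : Fin N => (k:ℕ) < (m:ℕ)),
              vB K N k ⊗ₜ (vB K N m ⊗ₜ[K] wB K N k) ) := by
  have hne : i ≠ m := by intro e; rw [e] at him; omega
  rw [map_sub, LinearMap.map_smul, map_sum, op2_tmul, sigma_wv_ne hne]
  rw [sum_filt_succ him (fun k => op2 K (sigmaH K N q) (vB K N k ⊗ₜ (wB K N k ⊗ₜ[K] vB K N m)))]
  have hs : ∑ k ∈ Finset.univ.filter (fun k : Fin N => (k:ℕ) < (m:ℕ)),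
      op2 K (sigmaH K N q) (vB K N k ⊗ₜ (wB K N k ⊗ₜ[K] vB K N m)) =
      ∑ k ∈ Finset.univ.filter (fun k : Fin N => (k:ℕ) < (m:ℕ)),
        q • (vB K N k ⊗ₜ (vB K N m ⊗ₜ[K] wB K N k)) := by
    refine Finset.sum_congr rfl (fun k hk => ?_)
    have hk' : k ≠ m := by simp at hk; intro e; rw [e] at hk; omega
    rw [op2_tmul, sigma_wv_ne hk', smul_tmul_right]
  rw [hs, op2_tmul, sigma_wv_diag]
  simp only [TensorProduct.tmul_sub, smul_tmul_right, TensorProduct.tmul_sum]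
  rw [← Finset.smul_sum]

lemma e5 (him : (m:ℕ)+1 = (i:ℕ)) :
    op1 K (sigmaH K N q) (q • (vB K N i ⊗ₜ (vB K N m ⊗ₜ[K] wB K N i)) -
        (q*(q-q⁻¹)) • ( vB K N m ⊗ₜ (vB K N m ⊗ₜ[K] wB K N m)
          - (q*(q-q⁻¹)) • ∑ l ∈ Finset.univ.filter (fun k : Fin N => (k:ℕ) < (m:ℕ)),
              vB K N m ⊗ₜ (vB K N l ⊗ₜ[K] wB K N l)
          + q • ∑ k ∈ Finset.univ.filter (fun k : Fin N => (k:ℕ) < (m:ℕ)),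
              vB K N k ⊗ₜ (vB K N m ⊗ₜ[K] wB K N k) )) =
      (q*q) • (vB K N m ⊗ₜ (vB K N i ⊗ₜ[K] wB K N i)) -
        (q*(q-q⁻¹)) • ( (q*q) • (vB K N m ⊗ₜ (vB K N m ⊗ₜ[K] wB K N m))
          - (q*(q-q⁻¹)*q) • ∑ l ∈ Finset.univ.filter (fun k : Fin N => (k:ℕ) < (m:ℕ)),
              vB K N l ⊗ₜ (vB K N m ⊗ₜ[K] wB K N l)
          + (q*q) • ∑ k ∈ Finset.univ.filter (fun k : Fin N => (k:ℕ) < (m:ℕ)),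
              vB K N m ⊗ₜ (vB K N k ⊗ₜ[K] wB K N k)
          + (q*(q-q⁻¹)*q) • ∑ k ∈ Finset.univ.filter (fun k : Fin N => (k:ℕ) < (m:ℕ)),
              vB K N k ⊗ₜ (vB K N m ⊗ₜ[K] wB K N k) ) := by
  simp only [map_sub, map_add, LinearMap.map_smul, map_sum]
  rw [op1_tmul, sigma_vv_gt (show (m:ℕ) < (i:ℕ) by omega)]
  rw [op1_tmul, sigma_vv_diag]
  have hs1 : ∑ l ∈ Finset.univ.filter (fun k : Fin N => (k:ℕ) < (m:ℕ)),
      op1 K (sigmaH K N q) (vB K N m ⊗ₜ (vB K N l ⊗ₜ[K] wB K N l)) =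
      ∑ l ∈ Finset.univ.filter (fun k : Fin N => (k:ℕ) < (m:ℕ)),
        q • (vB K N l ⊗ₜ (vB K N m ⊗ₜ[K] wB K N l)) := by
    refine Finset.sum_congr rfl (fun l hl => ?_)
    have hl' : (l:ℕ) < (m:ℕ) := by simpa using hl
    rw [op1_tmul, sigma_vv_gt hl', smul_tmul_left, assoc_smul,
      TensorProduct.assoc_tmul]
  have hs2 : ∑ k ∈ Finset.univ.filter (fun k : Fin N => (k:ℕ) < (m:ℕ)),
      op1 K (sigmaH K N q) (vB K N k ⊗ₜ (vB K N m ⊗ₜ[K] wB K N k)) =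
      ∑ k ∈ Finset.univ.filter (fun k : Fin N => (k:ℕ) < (m:ℕ)),
        (q • (vB K N m ⊗ₜ (vB K N k ⊗ₜ[K] wB K N k)) +
         (q*(q-q⁻¹)) • (vB K N k ⊗ₜ (vB K N m ⊗ₜ[K] wB K N k))) := by
    refine Finset.sum_congr rfl (fun k hk => ?_)
    have hk' : (k:ℕ) < (m:ℕ) := by simpa using hk
    rw [op1_tmul, sigma_vv_lt hk']
    simp only [TensorProduct.add_tmul, smul_tmul_left, assoc_add, assoc_smul,
      TensorProduct.assoc_tmul]
  rw [hs1, hs2]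
  simp only [smul_tmul_left, TensorProduct.add_tmul, assoc_smul, map_add,
    TensorProduct.assoc_tmul, Finset.sum_add_distrib, ← Finset.smul_sum]
  module

lemma Xel_diag (him : (m:ℕ)+1 = (i:ℕ)) :
    Xel K N q i i m =
      wB K N i ⊗ₜ (vB K N i ⊗ₜ[K] vB K N m)
      + (vB K N i ⊗ₜ (wB K N i ⊗ₜ[K] vB K N m) -
        (q*(q-q⁻¹)) • ∑ k ∈ Finset.univ.filter (fun k : Fin N => (k:ℕ) < (i:ℕ)),
          vB K N k ⊗ₜ (wB K N k ⊗ₜ[K] vB K N m))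
      + q • (wB K N i ⊗ₜ (vB K N m ⊗ₜ[K] vB K N i))
      + (q*q) • (vB K N m ⊗ₜ (wB K N i ⊗ₜ[K] vB K N i))
      + (q • (vB K N i ⊗ₜ (vB K N m ⊗ₜ[K] wB K N i)) -
        (q*(q-q⁻¹)) • ( vB K N m ⊗ₜ (vB K N m ⊗ₜ[K] wB K N m)
          - (q*(q-q⁻¹)) • ∑ l ∈ Finset.univ.filter (fun k : Fin N => (k:ℕ) < (m:ℕ)),
              vB K N m ⊗ₜ (vB K N l ⊗ₜ[K] wB K N l)
          + q • ∑ k ∈ Finset.univ.filter (fun k : Fin N => (k:ℕ) < (m:ℕ)),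
              vB K N k ⊗ₜ (vB K N m ⊗ₜ[K] wB K N k) ))
      + ((q*q) • (vB K N m ⊗ₜ (vB K N i ⊗ₜ[K] wB K N i)) -
        (q*(q-q⁻¹)) • ( (q*q) • (vB K N m ⊗ₜ (vB K N m ⊗ₜ[K] wB K N m))
          - (q*(q-q⁻¹)*q) • ∑ l ∈ Finset.univ.filter (fun k : Fin N => (k:ℕ) < (m:ℕ)),
              vB K N l ⊗ₜ (vB K N m ⊗ₜ[K] wB K N l)
          + (q*q) • ∑ k ∈ Finset.univ.filter (fun k : Fin N => (k:ℕ) < (m:ℕ)),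
              vB K N m ⊗ₜ (vB K N k ⊗ₜ[K] wB K N k)
          + (q*(q-q⁻¹)*q) • ∑ k ∈ Finset.univ.filter (fun k : Fin N => (k:ℕ) < (m:ℕ)),
              vB K N k ⊗ₜ (vB K N m ⊗ₜ[K] wB K N k) )) := by
  have h1 := e1 (q := q) him
  have h2 := e2 (q := q) him
  have h3 := e3 (q := q) him
  have h4 := e4 (q := q) him
  have h5 := e5 (q := q) him
  simp only [Xel, Sym3, LinearMap.add_apply, LinearMap.comp_apply, LinearMap.id_apply]
  rw [h1, h2, h3, h4, h5]

end Fam2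

section Endgame
variable {N : ℕ} {q : ℝ}

lemma Mel_offdiag_zero (hq1 : q ≠ 1) (hq2 : (1:ℝ)+q^2 ≠ 0)
    (β : H ℝ N ⊗[ℝ] H ℝ N →ₗ[ℝ] ℝ) {i j : Fin N} (h : i ≠ j)
    (hXe : betaId ℝ β (Xel ℝ N q i j j) = idBeta ℝ β (Xel ℝ N q i j j)) :
    β (Mel ℝ N q i j) = 0 := by
  have e := congrArg (ev1 ℝ N j) hXe
  rw [Xel_offdiag h] at e
  simp only [map_add, LinearMap.map_smul, betaId_tmul, idBeta_tmul, ev1_vB, ev1_wB,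
    smul_eq_mul, eq_self_iff_true, ite_true, mul_one, mul_zero, add_zero, zero_add] at e
  simp only [Mel, if_neg h, map_add, map_sub, LinearMap.map_smul, smul_eq_mul, zero_mul,
    sub_zero]
  have h2 : (1-q)*((1:ℝ)+q^2)*(β (wB ℝ N i ⊗ₜ vB ℝ N j) + q * β (vB ℝ N j ⊗ₜ wB ℝ N i)) = 0 := by
    linear_combination e
  rcases mul_eq_zero.mp h2 with h3 | h3
  · rcases mul_eq_zero.mp h3 with h4 | h4
    · exact absurd (by linarith : q = 1) hq1
    · exact absurd h4 hq2
  · exact h3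

lemma Mel_diag_eq (hq0 : q ≠ 0) (hq2 : (1:ℝ) - q^2 ≠ 0)
    (β : H ℝ N ⊗[ℝ] H ℝ N →ₗ[ℝ] ℝ) {i m : Fin N} (him : (m:ℕ)+1 = (i:ℕ))
    (hXe : betaId ℝ β (Xel ℝ N q i i m) = idBeta ℝ β (Xel ℝ N q i i m)) :
    β (Mel ℝ N q i i) = β (Mel ℝ N q m m) := by
  have hc : q*(q-q⁻¹) = q^2-1 := by field_simp
  have hmem : m ∈ Finset.univ.filter (fun k : Fin N => (k:ℕ) < (i:ℕ)) := by simp; omega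
  have hnmem : m ∉ Finset.univ.filter (fun k : Fin N => (k:ℕ) < (m:ℕ)) := by simp
  have hne : ¬ (i = m) := by intro h; rw [h] at him; omega
  have e := congrArg (ev1 ℝ N m) hXe
  rw [Xel_diag him, hc] at e
  simp only [map_add, map_sub, LinearMap.map_smul, map_sum, betaId_tmul, idBeta_tmul,
    ev1_vB, ev1_wB, smul_eq_mul, eq_self_iff_true, ite_true, mul_one, mul_zero,
    add_zero, zero_add, mul_ite, Finset.sum_ite_eq', hmem, hnmem, hne, ite_false,
    if_true, if_false, Finset.sum_const_zero, sub_zero, zero_sub] at e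
  rw [sum_filt_succ him (fun k => β (vB ℝ N k ⊗ₜ wB ℝ N k))] at e
  simp only [Mel, eq_self_iff_true, ite_true, hc, map_add, map_sub, LinearMap.map_smul,
    map_sum, smul_eq_mul, one_mul]
  rw [sum_filt_succ him (fun k => β (vB ℝ N k ⊗ₜ wB ℝ N k))]
  apply mul_left_cancel₀ hq2
  linear_combination e

end Endgame

/-- If `β` kills the `V` and `W` relations and `(β⊗id − id⊗β)(X_{ijk}) = 0` for all `i`
and `j ≥ k`, then `β(M_{ij}) = δ_{ij} c` for some constant `c`. -/
theorem beta_on_M (hN : 2 ≤ N) (hq0 : (0 : ℝ) < q') (hq1 : q' < 1)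
    (β : (H ℝ N) ⊗[ℝ] (H ℝ N) →ₗ[ℝ] ℝ)
    (hV : ∀ a b : Fin N, b ≤ a → β (VelH ℝ N q' a b) = 0)
    (hW : ∀ a b : Fin N, a ≤ b → β (WelH ℝ N q' a b) = 0)
    (hX : ∀ i j k : Fin N, k ≤ j →
      betaId ℝ β (Xel ℝ N q' i j k) = idBeta ℝ β (Xel ℝ N q' i j k)) :
    ∃ c : ℝ, ∀ i j : Fin N, β (Mel ℝ N q' i j) = if i = j then c else 0 := by
  have hq0' : q' ≠ 0 := ne_of_gt hq0
  have hq1' : q' ≠ 1 := ne_of_lt hq1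
  have h1q2 : (1:ℝ) - q'^2 ≠ 0 := by nlinarith
  have h1pq2 : (1:ℝ) + q'^2 ≠ 0 := by nlinarith
  have hpos : 0 < N := by omega
  refine ⟨β (Mel ℝ N q' ⟨0, hpos⟩ ⟨0, hpos⟩), fun i j => ?_⟩
  by_cases h : i = j
  · subst h
    simp only [if_pos rfl]
    have key : ∀ n (hn : n < N),
        β (Mel ℝ N q' ⟨n, hn⟩ ⟨n, hn⟩) = β (Mel ℝ N q' ⟨0, hpos⟩ ⟨0, hpos⟩) := by
      intro n
      induction n with
      | zero => intro hn; rfl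
      | succ n ih =>
        intro hn
        have hn' : n < N := by omega
        have him : (((⟨n, hn'⟩ : Fin N)):ℕ) + 1 = ((⟨n+1, hn⟩ : Fin N):ℕ) := rfl
        have hle : (⟨n, hn'⟩ : Fin N) ≤ ⟨n+1, hn⟩ := by
          rw [Fin.le_def]; omega
        have h2 := Mel_diag_eq hq0' h1q2 β him (hX _ _ _ hle)
        rw [h2, ih hn']
    have hi : i = ⟨i.val, i.isLt⟩ := by simp
    rw [hi]
    exact key i.val i.isLt
  · simp only [if_neg h]
    exact Mel_offdiag_zero hq1' h1pq2 β h (hX i j j le_rfl)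

end
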